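/- Let c > 0 and let f : [0,∞) → ℝ be continuous with f(t) ≤ −c for all t ≥ 0. Then there is no twice continuously differentiable function R : [0,∞) → (0,∞) with R'(0) ≤ 0 satisfying R''(t) = f(t)/R(t)³ for all t ≥ 0; more precisely, any positive C² solution with R(0) = R₀ > 0 and R'(0) ≤ 0 satisfies R(t) ≤ R₀ − c t²/(2R₀³) for as long as it remains positive, hence reaches 0 by time t₀ = √(2R₀⁴/c) (blowup in finite time). -/

import Mathlib

open Set Filter

/-- **Finite-time blowup of the width.** Let `c > 0` and let `f` be continuous on
`[0,∞)` with `f(t) ≤ −c` for all `t ≥ 0`. Consider `R'' = f/R³` with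
`R(0) = R₀ > 0` and `R'(0) ≤ 0`. Then: (a) on any interval `[0,T]` on which a
positive `C²` solution exists one has `R(t) ≤ R₀ − c t²/(2R₀³)` (so `R` reaches `0`
by time `t₀ = √(2R₀⁴/c)`); and (b) there is no positive `C²` solution on all of
`[0,∞)`. -/
theorem width_blowup (c : ℝ) (hc : 0 < c) (f : ℝ → ℝ)
    (hf : ContinuousOn f (Ici 0)) (hfc : ∀ t ≥ (0 : ℝ), f t ≤ -c)
    (R R' : ℝ → ℝ) (R₀ : ℝ) (hR₀ : 0 < R₀) (hR0 : R 0 = R₀) (hR'0 : R' 0 ≤ 0) :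
    (∀ T ≥ (0 : ℝ),
      (∀ t ∈ Icc 0 T, 0 < R t) →
      (∀ t ∈ Icc 0 T, HasDerivAt R (R' t) t) →
      (∀ t ∈ Icc 0 T, HasDerivAt R' (f t / R t ^ 3) t) →
      ∀ t ∈ Icc 0 T, R t ≤ R₀ - c * t ^ 2 / (2 * R₀ ^ 3)) ∧
    ¬ ((∀ t ≥ (0 : ℝ), 0 < R t) ∧ (∀ t ≥ (0 : ℝ), HasDerivAt R (R' t) t) ∧
        (∀ t ≥ (0 : ℝ), HasDerivAt R' (f t / R t ^ 3) t)) := by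
  have key : ∀ T ≥ (0 : ℝ),
      (∀ t ∈ Icc 0 T, 0 < R t) →
      (∀ t ∈ Icc 0 T, HasDerivAt R (R' t) t) →
      (∀ t ∈ Icc 0 T, HasDerivAt R' (f t / R t ^ 3) t) →
      ∀ t ∈ Icc 0 T, R t ≤ R₀ - c * t ^ 2 / (2 * R₀ ^ 3) := by
    intro T hT hpos hdR hdR'
    have hmemI : ∀ x ∈ interior (Icc (0:ℝ) T), x ∈ Icc (0:ℝ) T := fun x hx => interior_subset hx
    have h0mem : (0:ℝ) ∈ Icc (0:ℝ) T := left_mem_Icc.mpr hT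
    have hRcont : ContinuousOn R (Icc 0 T) :=
      fun t ht => (hdR t ht).continuousAt.continuousWithinAt
    have hR'cont : ContinuousOn R' (Icc 0 T) :=
      fun t ht => (hdR' t ht).continuousAt.continuousWithinAt
    -- Step 1 : R' is antitone
    have h1 : AntitoneOn R' (Icc 0 T) := by
      apply antitoneOn_of_deriv_nonpos (convex_Icc 0 T) hR'cont
      · intro x hx
        exact (hdR' x (hmemI x hx)).differentiableAt.differentiableWithinAt
      · intro x hx
        have hx' := hmemI x hx
        rw [(hdR' x hx').deriv]
        have hfx : f x ≤ 0 := (hfc x hx'.1).trans (by linarith)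
        have hRp : 0 < R x ^ 3 := pow_pos (hpos x hx') 3
        exact div_nonpos_of_nonpos_of_nonneg hfx hRp.le
    have hR'le : ∀ t ∈ Icc 0 T, R' t ≤ 0 :=
      fun t ht => (h1 h0mem ht ht.1).trans hR'0
    -- Step 2 : R is antitone, so R t ≤ R₀
    have h2 : AntitoneOn R (Icc 0 T) := by
      apply antitoneOn_of_deriv_nonpos (convex_Icc 0 T) hRcont
      · intro x hx
        exact (hdR x (hmemI x hx)).differentiableAt.differentiableWithinAt
      · intro x hx
        rw [(hdR x (hmemI x hx)).deriv]
        exact hR'le x (hmemI x hx)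
    have hRle : ∀ t ∈ Icc 0 T, R t ≤ R₀ := by
      intro t ht
      have := h2 h0mem ht ht.1
      rwa [hR0] at this
    -- Step 3 : second derivative bound  f t / R t ^ 3 ≤ -c / R₀ ^ 3
    have h3 : ∀ t ∈ Icc 0 T, f t / R t ^ 3 ≤ -c / R₀ ^ 3 := by
      intro t ht
      have hRp : 0 < R t := hpos t ht
      have h1' : f t / R t ^ 3 ≤ -c / R t ^ 3 := by
        gcongr
        exact hfc t ht.1
      have h2' : -c / R t ^ 3 ≤ -c / R₀ ^ 3 := by
        rw [neg_div, neg_div, neg_le_neg_iff]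
        gcongr
        exact hRle t ht
      linarith
    -- Step 4 : g t := R' t + c t / R₀³ is antitone, so R' t ≤ -c t / R₀³
    set g : ℝ → ℝ := fun t => R' t + c * t / R₀ ^ 3 with hg
    have hdg : ∀ t ∈ Icc 0 T, HasDerivAt g (f t / R t ^ 3 + c / R₀ ^ 3) t := by
      intro t ht
      have : HasDerivAt (fun t : ℝ => c * t / R₀ ^ 3) (c * 1 / R₀ ^ 3) t :=
        ((hasDerivAt_id t).const_mul c).div_const _
      have h2 := (hdR' t ht).add this; rw [mul_one] at h2; exact h2
    have h4 : AntitoneOn g (Icc 0 T) := by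
      apply antitoneOn_of_deriv_nonpos (convex_Icc 0 T)
      · exact fun t ht => (hdg t ht).continuousAt.continuousWithinAt
      · intro x hx
        exact (hdg x (hmemI x hx)).differentiableAt.differentiableWithinAt
      · intro x hx
        rw [(hdg x (hmemI x hx)).deriv]
        have := h3 x (hmemI x hx)
        have hd : -c / R₀ ^ 3 + c / R₀ ^ 3 = 0 := by ring
        linarith
    have hR'le' : ∀ t ∈ Icc 0 T, R' t ≤ -(c * t) / R₀ ^ 3 := by
      intro t ht
      have := h4 h0mem ht ht.1
      simp only [hg, mul_zero, zero_div, add_zero] at this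
      have := this.trans hR'0
      rw [neg_div]
      linarith
    -- Step 5 : h t := R t + c t² / (2 R₀³) is antitone
    set h : ℝ → ℝ := fun t => R t + c * t ^ 2 / (2 * R₀ ^ 3) with hh
    have hdh : ∀ t ∈ Icc 0 T, HasDerivAt h (R' t + c * t / R₀ ^ 3) t := by
      intro t ht
      have h1' : HasDerivAt (fun t : ℝ => c * t ^ 2 / (2 * R₀ ^ 3))
          (c * (2 * t) / (2 * R₀ ^ 3)) t := by
        have : HasDerivAt (fun t : ℝ => t ^ 2) (2 * t) t := by
          simpa using hasDerivAt_pow 2 t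
        exact (this.const_mul c).div_const _
      have := (hdR t ht).add h1'
      rw [show c * (2 * t) / (2 * R₀ ^ 3) = c * t / R₀ ^ 3 by ring] at this
      exact this
    have h5 : AntitoneOn h (Icc 0 T) := by
      apply antitoneOn_of_deriv_nonpos (convex_Icc 0 T)
      · exact fun t ht => (hdh t ht).continuousAt.continuousWithinAt
      · intro x hx
        exact (hdh x (hmemI x hx)).differentiableAt.differentiableWithinAt
      · intro x hx
        rw [(hdh x (hmemI x hx)).deriv]
        have := hR'le' x (hmemI x hx)
        have hx0 : (0:ℝ) ≤ x := (hmemI x hx).1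
        rw [neg_div] at this
        linarith
    intro t ht
    have := h5 h0mem ht ht.1
    simp only [hh, hR0] at this
    have h0 : R 0 + c * (0:ℝ) ^ 2 / (2 * R₀ ^ 3) = R₀ := by
      rw [hR0]; ring
    linarith [this, h0]
  refine ⟨key, ?_⟩
  rintro ⟨hpos, hdR, hdR'⟩
  set T : ℝ := Real.sqrt (2 * R₀ ^ 4 / c) + 1 with hTdef
  have hs : (0:ℝ) ≤ 2 * R₀ ^ 4 / c := by positivity
  have hT : 0 ≤ T := by positivity
  have hbound := key T hT (fun t ht => hpos t ht.1) (fun t ht => hdR t ht.1)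
    (fun t ht => hdR' t ht.1) T (right_mem_Icc.mpr hT)
  have hT2 : 2 * R₀ ^ 4 / c < T ^ 2 := by
    have h1 := Real.sq_sqrt hs
    have h2 := Real.sqrt_nonneg (2 * R₀ ^ 4 / c)
    nlinarith
  rw [div_lt_iff₀ hc] at hT2
  have hRT : 0 < R T := hpos T hT
  have : R₀ < c * T ^ 2 / (2 * R₀ ^ 3) := by
    rw [lt_div_iff₀ (by positivity)]
    nlinarith
  linarith
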